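/- Let $n,k\in\mathbb{N}$ and $c>0$. There exists $c_3=c_3(n,c,k)>0$ such that for all $0<a<b\le ka$ and all $t>0$: $\int_0^t s^{-n/2}\int_{\{y\in\mathbb{R}^n : a<|y|<b\}}\exp(-c|y|^2/s)\,dy\,ds \le c_3\, t\, \exp(-c a^2/(2t))$. -/

import Mathlib

open MeasureTheory Real

/-- For `x > 0`, `x^(n/2) * exp (-c*x) ≤ (1 + n! * (2/c)^n) * exp (-c*x/2)`. -/
lemma aux_rpow_exp_bound (n : ℕ) (c : ℝ) (hc : 0 < c) {x : ℝ} (hx : 0 < x) :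
    x ^ ((n : ℝ) / 2) * Real.exp (-c * x) ≤
      (1 + (n.factorial : ℝ) * (2 / c) ^ n) * Real.exp (-c * x / 2) := by
  have hx' : 0 ≤ x := hx.le
  have h1 : x ^ ((n : ℝ) / 2) ≤ 1 + x ^ n := by
    rcases le_total x 1 with h | h
    · have : x ^ ((n : ℝ) / 2) ≤ 1 := Real.rpow_le_one hx' h (by positivity)
      nlinarith [pow_nonneg hx' n]
    · have h2 : x ^ ((n : ℝ) / 2) ≤ x ^ (n : ℝ) :=
        Real.rpow_le_rpow_of_exponent_le h (by
          have : (0:ℝ) ≤ (n : ℝ) := Nat.cast_nonneg n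
          linarith)
      rw [Real.rpow_natCast] at h2
      linarith
  have hkey : 1 + x ^ n ≤ (1 + (n.factorial : ℝ) * (2 / c) ^ n) * Real.exp (c * x / 2) := by
    have he1 : (1 : ℝ) ≤ Real.exp (c * x / 2) := by
      rw [Real.one_le_exp_iff]; positivity
    have he2 : (c * x / 2) ^ n / (n.factorial : ℝ) ≤ Real.exp (c * x / 2) :=
      Real.pow_div_factorial_le_exp (c * x / 2) (by positivity) n
    have hfac : (0:ℝ) < (n.factorial : ℝ) := by positivity
    have hxn : x ^ n ≤ (n.factorial : ℝ) * (2 / c) ^ n * Real.exp (c * x / 2) := by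
      have h3 : (c * x / 2) ^ n ≤ (n.factorial : ℝ) * Real.exp (c * x / 2) := by
        rw [div_le_iff₀ hfac] at he2; linarith [he2]
      have h4 : x ^ n = (2 / c) ^ n * (c * x / 2) ^ n := by
        rw [← mul_pow]; congr 1; field_simp
      rw [h4]
      calc (2 / c) ^ n * (c * x / 2) ^ n
          ≤ (2 / c) ^ n * ((n.factorial : ℝ) * Real.exp (c * x / 2)) := by
            apply mul_le_mul_of_nonneg_left h3 (by positivity)
        _ = (n.factorial : ℝ) * (2 / c) ^ n * Real.exp (c * x / 2) := by ring
    calc 1 + x ^ n ≤ Real.exp (c * x / 2) +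
          (n.factorial : ℝ) * (2 / c) ^ n * Real.exp (c * x / 2) := by linarith
      _ = (1 + (n.factorial : ℝ) * (2 / c) ^ n) * Real.exp (c * x / 2) := by ring
  have hsw : Real.exp (-c * x) = Real.exp (-(c * x / 2)) * Real.exp (-(c * x / 2)) := by
    rw [← Real.exp_add]; congr 1; ring
  have h5 : (1 + x ^ n) * Real.exp (-(c * x / 2)) ≤
      (1 + (n.factorial : ℝ) * (2 / c) ^ n) := by
    rw [Real.exp_neg, mul_inv_le_iff₀ (Real.exp_pos _)]
    linarith [hkey]
  calc x ^ ((n : ℝ) / 2) * Real.exp (-c * x)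
      ≤ (1 + x ^ n) * Real.exp (-c * x) := by
        apply mul_le_mul_of_nonneg_right h1 (Real.exp_nonneg _)
    _ = ((1 + x ^ n) * Real.exp (-(c * x / 2))) * Real.exp (-(c * x / 2)) := by
        rw [hsw]; ring
    _ ≤ (1 + (n.factorial : ℝ) * (2 / c) ^ n) * Real.exp (-(c * x / 2)) :=
        mul_le_mul_of_nonneg_right h5 (Real.exp_nonneg _)
    _ = (1 + (n.factorial : ℝ) * (2 / c) ^ n) * Real.exp (-c * x / 2) := by ring_nf

theorem stmt2 (n k : ℕ) (hn : 0 < n) (hk : 0 < k) (c : ℝ) (hc : 0 < c) :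
    ∃ c₃ > (0:ℝ), ∀ a b t : ℝ, 0 < a → a < b → b ≤ (k : ℝ) * a → 0 < t →
      (∫ s in Set.Ioo (0:ℝ) t, s ^ (-(n : ℝ) / 2) *
          ∫ y in {y : EuclideanSpace ℝ (Fin n) | a < ‖y‖ ∧ ‖y‖ < b},
            Real.exp (-c * ‖y‖ ^ 2 / s))
        ≤ c₃ * t * Real.exp (-c * a ^ 2 / (2 * t)) := by
  set V : ℝ := (volume (Metric.ball (0 : EuclideanSpace ℝ (Fin n)) 1)).toReal with hV
  have hVfin : volume (Metric.ball (0 : EuclideanSpace ℝ (Fin n)) 1) < ⊤ :=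
    measure_ball_lt_top
  have hVpos : 0 < V := by
    rw [hV, ENNReal.toReal_pos_iff]
    exact ⟨Metric.measure_ball_pos volume _ one_pos, hVfin⟩
  set M : ℝ := 1 + (n.factorial : ℝ) * (2 / c) ^ n with hM
  have hMpos : 0 < M := by positivity
  have hkpos : (0:ℝ) < (k:ℝ) := Nat.cast_pos.mpr hk
  refine ⟨(k : ℝ) ^ n * V * M, by positivity, ?_⟩
  intro a b t ha hab hbk ht
  set A : Set (EuclideanSpace ℝ (Fin n)) := {y | a < ‖y‖ ∧ ‖y‖ < b} with hA
  have hAmeas : MeasurableSet A := by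
    have hAe : A = (fun y : EuclideanSpace ℝ (Fin n) => ‖y‖) ⁻¹' (Set.Ioo a b) := by
      ext y; simp [hA, Set.mem_Ioo]
    rw [hAe]
    exact continuous_norm.measurable measurableSet_Ioo
  have hAsub : A ⊆ Metric.closedBall (0 : EuclideanSpace ℝ (Fin n)) ((k : ℝ) * a) := by
    intro y hy
    rw [Metric.mem_closedBall, dist_zero_right]
    exact le_trans (le_of_lt hy.2) hbk
  have hka : (0:ℝ) ≤ (k : ℝ) * a := by positivity
  have hballvol : volume (Metric.closedBall (0 : EuclideanSpace ℝ (Fin n)) ((k : ℝ) * a))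
      = ENNReal.ofReal (((k : ℝ) * a) ^ n) *
        volume (Metric.ball (0 : EuclideanSpace ℝ (Fin n)) 1) := by
    have h := Measure.addHaar_closedBall (volume : Measure (EuclideanSpace ℝ (Fin n)))
      (0 : EuclideanSpace ℝ (Fin n)) hka
    rwa [finrank_euclideanSpace_fin] at h
  have hAfin : volume A < ⊤ :=
    lt_of_le_of_lt (measure_mono hAsub) measure_closedBall_lt_top
  have hAvol : (volume A).toReal ≤ ((k : ℝ) * a) ^ n * V := by
    have h1 : volume A ≤ ENNReal.ofReal (((k : ℝ) * a) ^ n) *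
        volume (Metric.ball (0 : EuclideanSpace ℝ (Fin n)) 1) := by
      rw [← hballvol]; exact measure_mono hAsub
    have h2 := ENNReal.toReal_mono
      (ENNReal.mul_ne_top ENNReal.ofReal_ne_top hVfin.ne) h1
    rwa [ENNReal.toReal_mul, ENNReal.toReal_ofReal (by positivity)] at h2
  -- pointwise bound on the outer integrand
  have hpt : ∀ s ∈ Set.Ioo (0:ℝ) t,
      ‖s ^ (-(n : ℝ) / 2) * ∫ y in A, Real.exp (-c * ‖y‖ ^ 2 / s)‖ ≤
        (k : ℝ) ^ n * V * M * Real.exp (-c * a ^ 2 / (2 * t)) := by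
    intro s hs
    obtain ⟨hs0, hst⟩ := hs
    have hspow : (0:ℝ) < s ^ (-(n : ℝ) / 2) := Real.rpow_pos_of_pos hs0 _
    have hinner_nonneg : 0 ≤ ∫ y in A, Real.exp (-c * ‖y‖ ^ 2 / s) :=
      setIntegral_nonneg hAmeas fun y _ => (Real.exp_pos _).le
    -- inner integral bound
    have hinner : ∫ y in A, Real.exp (-c * ‖y‖ ^ 2 / s) ≤
        Real.exp (-c * a ^ 2 / s) * (volume A).toReal := by
      have hb : ∀ y ∈ A, ‖Real.exp (-c * ‖y‖ ^ 2 / s)‖ ≤ Real.exp (-c * a ^ 2 / s) := by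
        intro y hy
        rw [Real.norm_eq_abs, abs_of_pos (Real.exp_pos _), Real.exp_le_exp,
          div_le_div_iff_of_pos_right hs0]
        have hya : a ≤ ‖y‖ := le_of_lt hy.1
        have h2 : a ^ 2 ≤ ‖y‖ ^ 2 := by nlinarith [norm_nonneg y]
        nlinarith [mul_le_mul_of_nonneg_left h2 hc.le]
      calc ∫ y in A, Real.exp (-c * ‖y‖ ^ 2 / s)
          ≤ ‖∫ y in A, Real.exp (-c * ‖y‖ ^ 2 / s)‖ := le_abs_self _
        _ ≤ Real.exp (-c * a ^ 2 / s) * (volume A).toReal :=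
            norm_setIntegral_le_of_norm_le_const hAfin hb
    -- combine
    rw [Real.norm_eq_abs, abs_of_nonneg (by positivity)]
    have hx : (0:ℝ) < a ^ 2 / s := by positivity
    have e1 : ((a:ℝ) ^ 2) ^ ((n : ℝ) / 2) = a ^ n := by
      rw [show (a:ℝ) ^ 2 = a ^ ((2:ℕ):ℝ) by rw [Real.rpow_natCast],
        ← Real.rpow_mul ha.le,
        show ((2:ℕ):ℝ) * ((n : ℝ) / 2) = (n : ℝ) by push_cast; ring,
        Real.rpow_natCast]
    have hrp : s ^ (-(n : ℝ) / 2) * a ^ n = (a ^ 2 / s) ^ ((n : ℝ) / 2) := by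
      rw [Real.div_rpow (by positivity) (by positivity : (0:ℝ) ≤ s), e1, neg_div,
        Real.rpow_neg hs0.le, div_eq_mul_inv]
      ring
    have hexp_eq : Real.exp (-c * a ^ 2 / s) = Real.exp (-c * (a ^ 2 / s)) := by
      rw [mul_div_assoc]
    have hmain : (a ^ 2 / s) ^ ((n : ℝ) / 2) * Real.exp (-c * (a ^ 2 / s)) ≤
        M * Real.exp (-c * (a ^ 2 / s) / 2) := by
      have := aux_rpow_exp_bound n c hc hx
      linarith [this]
    have hexp_mono : Real.exp (-c * (a ^ 2 / s) / 2) ≤ Real.exp (-c * a ^ 2 / (2 * t)) := by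
      rw [Real.exp_le_exp]
      have h1 : c * a ^ 2 / (2 * t) ≤ c * a ^ 2 / (2 * s) :=
        div_le_div_of_nonneg_left (by positivity) (by positivity) (by linarith)
      have e1 : -c * (a ^ 2 / s) / 2 = -(c * a ^ 2 / (2 * s)) := by ring
      have e2 : -c * a ^ 2 / (2 * t) = -(c * a ^ 2 / (2 * t)) := by ring
      rw [e1, e2]
      linarith
    calc s ^ (-(n : ℝ) / 2) * ∫ y in A, Real.exp (-c * ‖y‖ ^ 2 / s)
        ≤ s ^ (-(n : ℝ) / 2) * (Real.exp (-c * a ^ 2 / s) * (volume A).toReal) :=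
          mul_le_mul_of_nonneg_left hinner hspow.le
      _ ≤ s ^ (-(n : ℝ) / 2) * (Real.exp (-c * a ^ 2 / s) * (((k : ℝ) * a) ^ n * V)) := by
          apply mul_le_mul_of_nonneg_left _ hspow.le
          exact mul_le_mul_of_nonneg_left hAvol (Real.exp_nonneg _)
      _ = (k : ℝ) ^ n * V * ((s ^ (-(n : ℝ) / 2) * a ^ n) * Real.exp (-c * (a ^ 2 / s))) := by
          rw [hexp_eq, mul_pow]; ring
      _ = (k : ℝ) ^ n * V *
            ((a ^ 2 / s) ^ ((n : ℝ) / 2) * Real.exp (-c * (a ^ 2 / s))) := by rw [hrp]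
      _ ≤ (k : ℝ) ^ n * V * (M * Real.exp (-c * (a ^ 2 / s) / 2)) :=
          mul_le_mul_of_nonneg_left hmain (by positivity)
      _ ≤ (k : ℝ) ^ n * V * (M * Real.exp (-c * a ^ 2 / (2 * t))) := by
          apply mul_le_mul_of_nonneg_left _ (by positivity)
          exact mul_le_mul_of_nonneg_left hexp_mono hMpos.le
      _ = (k : ℝ) ^ n * V * M * Real.exp (-c * a ^ 2 / (2 * t)) := by ring
  -- apply the set integral bound on (0,t)
  have hIoo_fin : volume (Set.Ioo (0:ℝ) t) < ⊤ := measure_Ioo_lt_top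
  have hout := norm_setIntegral_le_of_norm_le_const hIoo_fin hpt
  change _ ≤ _ * (volume (Set.Ioo (0:ℝ) t)).toReal at hout
  have hIoo_vol : (volume (Set.Ioo (0:ℝ) t)).toReal = t := by
    rw [Real.volume_Ioo, ENNReal.toReal_ofReal (by linarith)]
    ring
  rw [hIoo_vol] at hout
  calc (∫ s in Set.Ioo (0:ℝ) t, s ^ (-(n : ℝ) / 2) *
        ∫ y in A, Real.exp (-c * ‖y‖ ^ 2 / s))
      ≤ ‖∫ s in Set.Ioo (0:ℝ) t, s ^ (-(n : ℝ) / 2) *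
          ∫ y in A, Real.exp (-c * ‖y‖ ^ 2 / s)‖ := le_abs_self _
    _ ≤ (k : ℝ) ^ n * V * M * Real.exp (-c * a ^ 2 / (2 * t)) * t := hout
    _ = (k : ℝ) ^ n * V * M * t * Real.exp (-c * a ^ 2 / (2 * t)) := by ring
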